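/- Let R be a commutative Noetherian local domain with total quotient ring Q, M a finitely generated torsion-free R-module of constant rank n whose endomorphism ring E = End_R(M) carries an R*-algebra structure. After localizing at all nonzero elements, the involution on E ⊗_R Q ≅ M_n(Q) is given by A* = C⁻¹A^TC with C^T = aC, a = ±1 (since Q is a field and a² = 1). Then the submodule T of M_* ⊗_E M generated by all elements x ⊗ y − a(y ⊗ x) is a torsion R-module. -/

import Mathlib

set_option maxHeartbeats 1000000

open Matrix TensorProduct

/-- The range of `m ↦ 1 ⊗ m` spans `A ⊗[R] M` over `A`. -/
private lemma aux_span (R A M : Type*) [CommRing R] [CommRing A] [Algebra R A]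
    [AddCommGroup M] [Module R M] :
    Submodule.span A (Set.range (TensorProduct.mk R A M 1)) = ⊤ := by
  rw [eq_top_iff]
  rintro v -
  induction v using TensorProduct.induction_on with
  | zero => exact Submodule.zero_mem _
  | tmul q m =>
      have : (q ⊗ₜ[R] m : A ⊗[R] M) = q • ((1 : A) ⊗ₜ[R] m) := by
        rw [smul_tmul', smul_eq_mul, mul_one]
      rw [this]
      exact Submodule.smul_mem _ _ (Submodule.subset_span ⟨m, rfl⟩)
  | add x y hx hy => exact Submodule.add_mem _ hx hy

/-- A bilinear vanishing statement can be checked on spanning sets. -/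
private lemma aux_bilin {K V W : Type*} [CommRing K] [AddCommGroup V] [Module K V]
    [AddCommGroup W] [Module K W] (θ : V ⊗[K] V →ₗ[K] W) (S F : V →ₗ[K] V)
    {s : Set V} (hs : Submodule.span K s = ⊤)
    (h : ∀ x ∈ s, ∀ y ∈ s, θ ((S x) ⊗ₜ[K] y - x ⊗ₜ[K] (F y)) = 0) :
    ∀ u v : V, θ ((S u) ⊗ₜ[K] v - u ⊗ₜ[K] (F v)) = 0 := by
  set B : V →ₗ[K] V →ₗ[K] W := LinearMap.mk₂ K
    (fun u v => θ ((S u) ⊗ₜ[K] v - u ⊗ₜ[K] (F v)))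
    (fun u u' v => by
      rw [← _root_.map_add]
      congr 1
      rw [_root_.map_add, add_tmul, add_tmul]
      abel)
    (fun c u v => by
      rw [← _root_.map_smul]
      congr 1
      simp only [_root_.map_smul, LinearMap.smul_apply, smul_sub, tmul_smul, smul_tmul'])
    (fun u v v' => by
      rw [← _root_.map_add]
      congr 1
      rw [_root_.map_add, tmul_add, tmul_add]
      abel)
    (fun c u v => by
      rw [← _root_.map_smul]
      congr 1
      simp only [_root_.map_smul, LinearMap.smul_apply, smul_sub, tmul_smul, smul_tmul']) with hBdef
  have hB0 : B = 0 := by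
    apply LinearMap.ext_on hs
    intro x hx
    apply LinearMap.ext_on hs
    intro y hy
    simpa [hBdef, map_sub] using h x hx y hy
  intro u v
  exact LinearMap.congr_fun (LinearMap.congr_fun hB0 u) v

/-- The key matrix computation: from the adjoint relations one deduces the
commutation relation. -/
private lemma aux_rel {K : Type*} [CommRing K] {V : Type*} [AddCommGroup V] [Module K V]
    {n : ℕ} (b : Module.Basis (Fin n) K V) (C : Matrix (Fin n) (Fin n) K) [Invertible C]
    (a' : K) (hC : Cᵀ = a' • C) (Rel : Submodule K (V ⊗[K] V))
    (hrel : ∀ (g : V →ₗ[K] V) (u v : V),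
      (Matrix.toLin b b (⅟C * (LinearMap.toMatrix b b g)ᵀ * C)) u ⊗ₜ[K] v
        - u ⊗ₜ[K] (g v) ∈ Rel) :
    ∀ u v : V, u ⊗ₜ[K] v - a' • (v ⊗ₜ[K] u) ∈ Rel := by
  classical
  rcases isEmpty_or_nonempty (Fin n) with hE | hNE
  · intro u v
    have hz : ∀ w : V, w = 0 := fun w => b.repr.injective
      (Finsupp.ext fun i => (hE.false i).elim)
    rw [hz u, hz v]
    simp
  · obtain ⟨i0⟩ := hNE
    set e₀ : Fin n → K := Pi.single i0 1 with he₀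
    set w₀ : V := b.equivFun.symm (⅟C *ᵥ e₀) with hw₀
    have L2 : ∀ u v : V,
        ((⇑(b.repr v) ⬝ᵥ (C *ᵥ ⇑(b.repr u))) • w₀) ⊗ₜ[K] (b i0) - u ⊗ₜ[K] v ∈ Rel := by
      intro u v
      have hL := hrel (Matrix.toLin b b (Matrix.vecMulVec ⇑(b.repr v) e₀)) u (b i0)
      rw [LinearMap.toMatrix_toLin] at hL
      have h1 : (Matrix.toLin b b (Matrix.vecMulVec ⇑(b.repr v) e₀)) (b i0) = v := by
        rw [Matrix.toLin_self]
        have hco : ∀ j, (Matrix.vecMulVec ⇑(b.repr v) e₀) j i0 • b j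
            = b.repr v j • b j := by
          intro j
          rw [Matrix.vecMulVec_apply, he₀, Pi.single_eq_same, mul_one]
        rw [Finset.sum_congr rfl fun j _ => hco j]
        exact b.sum_repr v
      have hAt : (Matrix.vecMulVec ⇑(b.repr v) e₀)ᵀ = Matrix.vecMulVec e₀ ⇑(b.repr v) := by
        ext i j
        rw [Matrix.transpose_apply, Matrix.vecMulVec_apply, Matrix.vecMulVec_apply, mul_comm]
      have hAvec : ∀ w : Fin n → K,
          Matrix.vecMulVec e₀ ⇑(b.repr v) *ᵥ w = (⇑(b.repr v) ⬝ᵥ w) • e₀ := by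
        intro w
        ext i
        simp only [Matrix.mulVec, Matrix.vecMulVec_apply, dotProduct,
          Pi.smul_apply, smul_eq_mul]
        rw [Finset.sum_congr rfl fun j _ => mul_assoc (e₀ i) (b.repr v j) (w j),
          ← Finset.mul_sum]
        ring
      have h2 : (Matrix.toLin b b (⅟C * (Matrix.vecMulVec ⇑(b.repr v) e₀)ᵀ * C)) u
          = (⇑(b.repr v) ⬝ᵥ (C *ᵥ ⇑(b.repr u))) • w₀ := by
        rw [Matrix.toLin_apply]
        have hvec : (⅟C * (Matrix.vecMulVec ⇑(b.repr v) e₀)ᵀ * C) *ᵥ ⇑(b.repr u)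
            = (⇑(b.repr v) ⬝ᵥ (C *ᵥ ⇑(b.repr u))) • (⅟C *ᵥ e₀) := by
          rw [← Matrix.mulVec_mulVec, ← Matrix.mulVec_mulVec, hAt, hAvec,
            Matrix.mulVec_smul]
        rw [hvec, hw₀, Module.Basis.equivFun_symm_apply, Finset.smul_sum]
        exact Finset.sum_congr rfl fun j _ => by rw [Pi.smul_apply, smul_assoc]
      rw [h1, h2] at hL
      exact hL
    intro u v
    have h1 := L2 u v
    have h2 := L2 v u
    have hkey : ⇑(b.repr v) ⬝ᵥ (C *ᵥ ⇑(b.repr u))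
        = a' * (⇑(b.repr u) ⬝ᵥ (C *ᵥ ⇑(b.repr v))) := by
      rw [Matrix.dotProduct_mulVec, ← Matrix.mulVec_transpose, hC,
        Matrix.smul_mulVec, smul_dotProduct, dotProduct_comm,
        smul_eq_mul]
    have heq : u ⊗ₜ[K] v - a' • (v ⊗ₜ[K] u)
        = a' • (((⇑(b.repr u) ⬝ᵥ (C *ᵥ ⇑(b.repr v))) • w₀) ⊗ₜ[K] (b i0) - v ⊗ₜ[K] u)
          - (((⇑(b.repr v) ⬝ᵥ (C *ᵥ ⇑(b.repr u))) • w₀) ⊗ₜ[K] (b i0) - u ⊗ₜ[K] v) := by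
      conv_rhs => rw [smul_sub, smul_tmul', smul_smul, ← hkey]
      abel
    rw [heq]
    exact Submodule.sub_mem Rel (Submodule.smul_mem Rel a' h2) h1

theorem stmt_19 (R : Type*) [CommRing R] [IsDomain R] [IsNoetherianRing R]
    [IsLocalRing R] (M : Type*) [AddCommGroup M] [Module R M] [Module.Finite R M]
    (htf : NoZeroSMulDivisors R M)
    (st : Module.End R M → Module.End R M)
    (hadd : ∀ f g : Module.End R M, st (f + g) = st f + st g)
    (hsmul : ∀ (r : R) (f : Module.End R M), st (r • f) = r • st f)
    (hmul : ∀ f g : Module.End R M, st (f * g) = st g * st f)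
    (hone : st 1 = 1)
    (hinv : ∀ f : Module.End R M, st (st f) = f)
    (n : ℕ) (b : Module.Basis (Fin n) (FractionRing R) ((FractionRing R) ⊗[R] M))
    (C : Matrix (Fin n) (Fin n) (FractionRing R)) [Invertible C]
    (a : R) (ha : a = 1 ∨ a = -1)
    (hC : Cᵀ = (algebraMap R (FractionRing R) a) • C)
    (hmat : ∀ f : Module.End R M,
      LinearMap.toMatrix b b (LinearMap.baseChange (FractionRing R) (st f)) =
        ⅟C * (LinearMap.toMatrix b b (LinearMap.baseChange (FractionRing R) f))ᵀ * C) :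
    ∀ t ∈ Submodule.span R
        {w : (M ⊗[R] M) ⧸ (Submodule.span R
            {z : M ⊗[R] M | ∃ (f : Module.End R M) (m m' : M),
              z = (st f • m) ⊗ₜ[R] m' - m ⊗ₜ[R] (f • m')}) |
          ∃ x y : M,
            w = Submodule.Quotient.mk (x ⊗ₜ[R] y - a • (y ⊗ₜ[R] x))},
      ∃ r : R, r ≠ 0 ∧ r • t = 0 := by
  classical
  set rel : Submodule R (M ⊗[R] M) := Submodule.span R
      {z : M ⊗[R] M | ∃ (f : Module.End R M) (m m' : M),
        z = (st f • m) ⊗ₜ[R] m' - m ⊗ₜ[R] (f • m')} with hrel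
  -- localized-module instances
  have mkM : M →ₗ[R] (FractionRing R) ⊗[R] M := TensorProduct.mk R (FractionRing R) M 1
  haveI hlm : IsLocalizedModule (nonZeroDivisors R) (TensorProduct.mk R (FractionRing R) M 1) :=
    (isLocalizedModule_iff_isBaseChange (nonZeroDivisors R) (FractionRing R) _).mpr
      (TensorProduct.isBaseChange R M (FractionRing R))
  haveI hlp : IsLocalizedModule (nonZeroDivisors R)
      (TensorProduct.mk R (FractionRing R) ((M ⊗[R] M) ⧸ rel) 1) :=
    (isLocalizedModule_iff_isBaseChange (nonZeroDivisors R) (FractionRing R) _).mpr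
      (TensorProduct.isBaseChange R ((M ⊗[R] M) ⧸ rel) (FractionRing R))
  haveI : Module.FinitePresentation R M := Module.finitePresentation_of_finite R M
  have hspan := aux_span R (FractionRing R) M
  have hext : ∀ g₁ g₂ : (FractionRing R) ⊗[R] M →ₗ[FractionRing R] (FractionRing R) ⊗[R] M,
      (∀ m : M, g₁ ((1 : FractionRing R) ⊗ₜ[R] m) = g₂ ((1 : FractionRing R) ⊗ₜ[R] m)) →
        g₁ = g₂ := by
    intro g₁ g₂ h
    apply LinearMap.ext_on hspan
    rintro x ⟨m, rfl⟩
    exact h m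
  -- every endomorphism of the base change is, up to a unit, a base change
  have hsurj : ∀ g : (FractionRing R) ⊗[R] M →ₗ[FractionRing R] (FractionRing R) ⊗[R] M,
      ∃ (h : Module.End R M) (s : nonZeroDivisors R),
        LinearMap.baseChange (FractionRing R) h = (algebraMap R (FractionRing R) (s : R)) • g := by
    intro g
    obtain ⟨⟨h, s⟩, hs⟩ := IsLocalizedModule.surj (nonZeroDivisors R)
      (IsLocalizedModule.mapExtendScalars (nonZeroDivisors R)
        (TensorProduct.mk R (FractionRing R) M 1)
        (TensorProduct.mk R (FractionRing R) M 1) (FractionRing R)) g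
    refine ⟨h, s, ?_⟩
    have heq : IsLocalizedModule.mapExtendScalars (nonZeroDivisors R)
        (TensorProduct.mk R (FractionRing R) M 1)
        (TensorProduct.mk R (FractionRing R) M 1) (FractionRing R) h
        = LinearMap.baseChange (FractionRing R) h := by
      apply hext
      intro m
      rw [IsLocalizedModule.mapExtendScalars_apply_apply]
      have := IsLocalizedModule.map_apply (nonZeroDivisors R)
        (TensorProduct.mk R (FractionRing R) M 1)
        (TensorProduct.mk R (FractionRing R) M 1) h m
      rw [show ((TensorProduct.mk R (FractionRing R) M 1) m)
          = (1 : FractionRing R) ⊗ₜ[R] m from rfl] at this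
      rw [this]
      rw [LinearMap.baseChange_tmul]
      rfl
    rw [← heq, ← hs, algebraMap_smul]
    rfl
  -- the relations submodule after base change
  set RelQ : Submodule (FractionRing R)
      (((FractionRing R) ⊗[R] M) ⊗[FractionRing R] ((FractionRing R) ⊗[R] M)) :=
    Submodule.span (FractionRing R)
      {z | ∃ (f : Module.End R M) (u v : (FractionRing R) ⊗[R] M),
        z = (LinearMap.baseChange (FractionRing R) (st f) u) ⊗ₜ[FractionRing R] v
          - u ⊗ₜ[FractionRing R] (LinearMap.baseChange (FractionRing R) f v)} with hRelQ
  have L1 : ∀ (g : (FractionRing R) ⊗[R] M →ₗ[FractionRing R] (FractionRing R) ⊗[R] M)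
      (u v : (FractionRing R) ⊗[R] M),
      (Matrix.toLin b b (⅟C * (LinearMap.toMatrix b b g)ᵀ * C)) u ⊗ₜ[FractionRing R] v
        - u ⊗ₜ[FractionRing R] (g v) ∈ RelQ := by
    intro g u v
    obtain ⟨h, s, hs⟩ := hsurj g
    have hu : IsUnit (algebraMap R (FractionRing R) (s : R)) := IsLocalization.map_units _ s
    have hc0 : (algebraMap R (FractionRing R) (s : R)) ≠ 0 := hu.ne_zero
    have key : (Matrix.toLin b b
        (⅟C * (LinearMap.toMatrix b b ((algebraMap R (FractionRing R) (s : R)) • g))ᵀ * C)) u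
          ⊗ₜ[FractionRing R] v
        - u ⊗ₜ[FractionRing R] (((algebraMap R (FractionRing R) (s : R)) • g) v) ∈ RelQ := by
      rw [← hs, ← hmat h, Matrix.toLin_toMatrix]
      exact Submodule.subset_span ⟨h, u, v, rfl⟩
    have hsc : (Matrix.toLin b b
        (⅟C * (LinearMap.toMatrix b b ((algebraMap R (FractionRing R) (s : R)) • g))ᵀ * C)) u
          ⊗ₜ[FractionRing R] v
        - u ⊗ₜ[FractionRing R] (((algebraMap R (FractionRing R) (s : R)) • g) v)
        = (algebraMap R (FractionRing R) (s : R)) •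
          ((Matrix.toLin b b (⅟C * (LinearMap.toMatrix b b g)ᵀ * C)) u ⊗ₜ[FractionRing R] v
            - u ⊗ₜ[FractionRing R] (g v)) := by
      rw [_root_.map_smul, Matrix.transpose_smul, Matrix.mul_smul, Matrix.smul_mul,
        _root_.map_smul]
      simp only [LinearMap.smul_apply, smul_sub, tmul_smul, smul_tmul']
    rw [hsc] at key
    have hfin := Submodule.smul_mem RelQ (algebraMap R (FractionRing R) (s : R))⁻¹ key
    rwa [inv_smul_smul₀ hc0] at hfin
  have C1 := aux_rel b C (algebraMap R (FractionRing R) a) hC RelQ L1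
  -- the comparison map θ
  set ψ : ((FractionRing R) ⊗[R] M) ⊗[FractionRing R] ((FractionRing R) ⊗[R] M)
      ≃ₗ[FractionRing R] (FractionRing R) ⊗[R] (M ⊗[R] M) :=
    (TensorProduct.AlgebraTensorModule.cancelBaseChange R (FractionRing R) (FractionRing R)
        ((FractionRing R) ⊗[R] M) M).trans
      (TensorProduct.AlgebraTensorModule.assoc R R (FractionRing R) (FractionRing R) M M)
      with hψ
  set θ : ((FractionRing R) ⊗[R] M) ⊗[FractionRing R] ((FractionRing R) ⊗[R] M)
      →ₗ[FractionRing R] (FractionRing R) ⊗[R] ((M ⊗[R] M) ⧸ rel) :=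
    (LinearMap.baseChange (FractionRing R) rel.mkQ) ∘ₗ (ψ : _ →ₗ[FractionRing R] _) with hθ
  have hψval : ∀ (m m' : M),
      ψ (((1 : FractionRing R) ⊗ₜ[R] m) ⊗ₜ[FractionRing R] ((1 : FractionRing R) ⊗ₜ[R] m'))
        = (1 : FractionRing R) ⊗ₜ[R] (m ⊗ₜ[R] m') := by
    intro m m'
    rw [hψ, LinearEquiv.trans_apply,
      TensorProduct.AlgebraTensorModule.cancelBaseChange_tmul, one_smul,
      TensorProduct.AlgebraTensorModule.assoc_tmul]
  have hθval : ∀ (m m' : M),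
      θ (((1 : FractionRing R) ⊗ₜ[R] m) ⊗ₜ[FractionRing R] ((1 : FractionRing R) ⊗ₜ[R] m'))
        = (1 : FractionRing R) ⊗ₜ[R] (Submodule.Quotient.mk (p := rel) (m ⊗ₜ[R] m')) := by
    intro m m'
    rw [hθ, LinearMap.comp_apply, LinearEquiv.coe_coe, hψval, LinearMap.baseChange_tmul]
    rfl
  -- θ kills RelQ
  have hker : RelQ ≤ LinearMap.ker θ := by
    rw [hRelQ, Submodule.span_le]
    rintro z ⟨f, u, v, rfl⟩
    refine LinearMap.mem_ker.mpr ?_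
    refine aux_bilin θ (LinearMap.baseChange (FractionRing R) (st f))
      (LinearMap.baseChange (FractionRing R) f) hspan ?_ u v
    rintro x ⟨m, rfl⟩ y ⟨m', rfl⟩
    rw [show ((TensorProduct.mk R (FractionRing R) M 1) m)
        = (1 : FractionRing R) ⊗ₜ[R] m from rfl,
      show ((TensorProduct.mk R (FractionRing R) M 1) m')
        = (1 : FractionRing R) ⊗ₜ[R] m' from rfl]
    rw [_root_.map_sub, LinearMap.baseChange_tmul, LinearMap.baseChange_tmul,
      hθval, hθval, ← TensorProduct.tmul_sub, ← Submodule.Quotient.mk_sub]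
    have hmem : Submodule.Quotient.mk (p := rel)
        ((st f) m ⊗ₜ[R] m' - m ⊗ₜ[R] (f m')) = 0 := by
      rw [Submodule.Quotient.mk_eq_zero]
      refine Submodule.subset_span ⟨f, m, m', ?_⟩
      rw [Module.End.smul_def, Module.End.smul_def]
    rw [hmem, TensorProduct.tmul_zero]
  -- torsionness of the generators
  have hgen : ∀ x y : M, ∃ r : R, r ≠ 0 ∧
      r • (Submodule.Quotient.mk (p := rel) (x ⊗ₜ[R] y - a • (y ⊗ₜ[R] x))) = 0 := by
    intro x y
    have hmem := C1 ((1 : FractionRing R) ⊗ₜ[R] x) ((1 : FractionRing R) ⊗ₜ[R] y)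
    have hz : θ (((1 : FractionRing R) ⊗ₜ[R] x) ⊗ₜ[FractionRing R]
        ((1 : FractionRing R) ⊗ₜ[R] y)
        - (algebraMap R (FractionRing R) a) • (((1 : FractionRing R) ⊗ₜ[R] y)
          ⊗ₜ[FractionRing R] ((1 : FractionRing R) ⊗ₜ[R] x))) = 0 := hker hmem
    rw [_root_.map_sub, _root_.map_smul, hθval, hθval] at hz
    have hval : (TensorProduct.mk R (FractionRing R) ((M ⊗[R] M) ⧸ rel) 1)
        (Submodule.Quotient.mk (p := rel) (x ⊗ₜ[R] y - a • (y ⊗ₜ[R] x)))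
        = (1 : FractionRing R) ⊗ₜ[R]
            (Submodule.Quotient.mk (p := rel) (x ⊗ₜ[R] y))
          - (algebraMap R (FractionRing R) a) • ((1 : FractionRing R) ⊗ₜ[R]
            (Submodule.Quotient.mk (p := rel) (y ⊗ₜ[R] x))) := by
      rw [show ((TensorProduct.mk R (FractionRing R) ((M ⊗[R] M) ⧸ rel) 1)
          (Submodule.Quotient.mk (p := rel) (x ⊗ₜ[R] y - a • (y ⊗ₜ[R] x))))
          = (1 : FractionRing R) ⊗ₜ[R]
            (Submodule.Quotient.mk (p := rel) (x ⊗ₜ[R] y - a • (y ⊗ₜ[R] x))) from rfl]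
      rw [Submodule.Quotient.mk_sub, Submodule.Quotient.mk_smul,
        TensorProduct.tmul_sub, TensorProduct.tmul_smul, algebraMap_smul]
    rw [← hval] at hz
    obtain ⟨s, hs⟩ := (IsLocalizedModule.eq_zero_iff (nonZeroDivisors R)
      (TensorProduct.mk R (FractionRing R) ((M ⊗[R] M) ⧸ rel) 1)).mp hz
    exact ⟨(s : R), nonZeroDivisors.coe_ne_zero s, hs⟩
  -- conclude by span induction
  intro t ht
  refine Submodule.span_induction ?_ ⟨1, one_ne_zero, by simp⟩ ?_ ?_ ht
  · rintro w ⟨x, y, rfl⟩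
    exact hgen x y
  · rintro u v _ _ ⟨r, hr, hru⟩ ⟨r', hr', hrv⟩
    refine ⟨r * r', mul_ne_zero hr hr', ?_⟩
    have h1 : (r * r') • u = 0 := by rw [mul_comm, ← smul_smul, hru, smul_zero]
    have h2 : (r * r') • v = 0 := by rw [← smul_smul, hrv, smul_zero]
    rw [smul_add, h1, h2, add_zero]
  · rintro c u _ ⟨r, hr, hru⟩
    exact ⟨r, hr, by rw [smul_comm, hru, smul_zero]⟩
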